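/- Let 0 ≤ β₁ ≤ β₂ < 1 and ε > 0, and let m̂_t and v̂_t be the bias-corrected first and second moment estimates of Adam built from arbitrary vectors g₁, …, g_t ∈ ℝ^d (i.e., m_t = β₁m_{t−1} + (1−β₁)g_t, v_t = β₂v_{t−1} + (1−β₂)g_t ⊙ g_t with m₀ = v₀ = 0, m̂_t = m_t/(1−β₁^t), v̂_t = v_t/(1−β₂^t)). Then for every t ≥ 1, ‖ m̂_t / (√v̂_t + ε·1) ‖_∞ ≤ √((1−β₁)/(1−β₂)). -/
import Mathlib


/-- the bias-corrected Adam update is bounded entrywise by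
`√((1-β₁)/(1-β₂))` in the supremum norm. -/
theorem adam_update_sup_bound {d : ℕ} (β₁ β₂ ε : ℝ) (hβ₁ : 0 ≤ β₁) (hβ₁₂ : β₁ ≤ β₂)
    (hβ₂ : β₂ < 1) (hε : 0 < ε) (g : ℕ → Fin d → ℝ) (m v : ℕ → Fin d → ℝ)
    (hm0 : ∀ i, m 0 i = 0) (hv0 : ∀ i, v 0 i = 0)
    (hm : ∀ t i, m (t + 1) i = β₁ * m t i + (1 - β₁) * g (t + 1) i)
    (hv : ∀ t i, v (t + 1) i = β₂ * v t i + (1 - β₂) * (g (t + 1) i) ^ 2) :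
    ∀ t, 1 ≤ t → ∀ i,
      |(m t i / (1 - β₁ ^ t)) / (Real.sqrt (v t i / (1 - β₂ ^ t)) + ε)|
        ≤ Real.sqrt ((1 - β₁) / (1 - β₂)) := by
  intro t ht i
  have hβ₂0 : 0 ≤ β₂ := le_trans hβ₁ hβ₁₂
  have hβ₁1 : β₁ < 1 := lt_of_le_of_lt hβ₁₂ hβ₂
  -- key induction
  have key : ∀ s, 1 ≤ s →
      0 ≤ v s i ∧ (1 - β₂) * (m s i) ^ 2 ≤ (1 - β₁) * (1 - β₁ ^ s) * v s i := by
    intro s hs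
    induction s, hs using Nat.le_induction with
    | base =>
      have hm1 : m 1 i = β₁ * m 0 i + (1 - β₁) * g 1 i := hm 0 i
      have hv1 : v 1 i = β₂ * v 0 i + (1 - β₂) * (g 1 i) ^ 2 := hv 0 i
      simp only [hm0, hv0] at hm1 hv1
      rw [hm1, hv1]
      simp only [pow_one]
      constructor
      · nlinarith [sq_nonneg (g 1 i)]
      · nlinarith [sq_nonneg (g 1 i), sq_nonneg ((1 - β₁) * g 1 i)]
    | succ n hn ih =>
      obtain ⟨hvn, hkey⟩ := ih
      have hm' := hm n i
      have hv' := hv n i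
      have hPlt : β₁ ^ n < 1 := pow_lt_one₀ hβ₁ hβ₁1 (by omega)
      have hP0 : 0 ≤ β₁ ^ n := pow_nonneg hβ₁ n
      set a := m n i with ha
      set b := v n i with hb
      set G := g (n + 1) i with hG
      set P := β₁ ^ n with hP
      have hpow : β₁ ^ (n + 1) = β₁ * P := by rw [hP, pow_succ]; ring
      constructor
      · rw [hv']; nlinarith [sq_nonneg G]
      · rw [hm', hv', hpow]
        rcases eq_or_lt_of_le hβ₁ with hb0 | hb0
        · -- β₁ = 0
          rw [← hb0]
          have hP0' : P = 0 := by rw [hP, ← hb0, zero_pow (by omega : n ≠ 0)]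
          rw [hP0']
          nlinarith [mul_nonneg hβ₂0 hvn, sq_nonneg G]
        · -- β₁ > 0
          have hb1 : 0 < 1 - β₁ := by linarith
          have hP1 : 0 < 1 - P := by linarith
          have hbP1 : 0 < 1 - β₁ * P := by nlinarith
          -- Cauchy-Schwarz step with A = β₁(1-P), B = 1-β₁
          have hcs : β₁ * (1 - β₁) * ((1 - P) * (β₁ * a + (1 - β₁) * G) ^ 2) ≤
              β₁ * (1 - β₁) * ((1 - β₁ * P) * (β₁ * a ^ 2 + (1 - P) * (1 - β₁) * G ^ 2)) := by
            nlinarith [sq_nonneg ((β₁ * (1 - P)) * ((1 - β₁) * G) - (1 - β₁) * (β₁ * a)),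
              mul_nonneg (mul_nonneg hβ₁ hP1.le) hb1.le]
          have hstep : (1 - P) * (β₁ * a + (1 - β₁) * G) ^ 2 ≤
              (1 - β₁ * P) * (β₁ * a ^ 2 + (1 - P) * (1 - β₁) * G ^ 2) :=
            le_of_mul_le_mul_left hcs (by positivity)
          have h1 := mul_le_mul_of_nonneg_left hstep (by linarith : (0:ℝ) ≤ 1 - β₂)
          have h2 := mul_le_mul_of_nonneg_left hkey
            (mul_nonneg hβ₁ hbP1.le : (0:ℝ) ≤ β₁ * (1 - β₁ * P))
          have h3 : 0 ≤ (β₂ - β₁) * b * ((1 - β₁) * ((1 - P) * (1 - β₁ * P))) :=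
            mul_nonneg (mul_nonneg (by linarith) hvn) (by positivity)
          have h4 : (1 - P) * ((1 - β₂) * (β₁ * a + (1 - β₁) * G) ^ 2) ≤
              (1 - P) * ((1 - β₁) * (1 - β₁ * P) * (β₂ * b + (1 - β₂) * G ^ 2)) := by
            linarith [h1, h2, h3]
          exact le_of_mul_le_mul_left h4 hP1
  obtain ⟨hvpos, hkey⟩ := key t ht
  have hp : 0 < 1 - β₁ ^ t := by
    have := pow_lt_one₀ hβ₁ hβ₁1 (by omega : t ≠ 0); linarith
  have hq : 0 < 1 - β₂ ^ t := by
    have := pow_lt_one₀ hβ₂0 hβ₂ (by omega : t ≠ 0); linarith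
  have hqp : 1 - β₂ ^ t ≤ 1 - β₁ ^ t := by
    have := pow_le_pow_left₀ hβ₁ hβ₁₂ t; linarith
  set M := m t i / (1 - β₁ ^ t) with hM
  set V := v t i / (1 - β₂ ^ t) with hV
  have hV0 : 0 ≤ V := div_nonneg hvpos (le_of_lt hq)
  have hC0 : 0 ≤ (1 - β₁) / (1 - β₂) := div_nonneg (by linarith) (by linarith)
  have hM2 : M ^ 2 ≤ (1 - β₁) / (1 - β₂) * V := by
    rw [hM, hV, div_pow, div_mul_div_comm, div_le_div_iff₀ (by positivity) (mul_pos (by linarith : (0:ℝ) < 1 - β₂) hq)]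
    nlinarith [mul_le_mul_of_nonneg_right hkey (le_of_lt hq),
      mul_nonneg (mul_nonneg (by linarith : (0:ℝ) ≤ 1 - β₁) hvpos)
        (mul_nonneg (le_of_lt hp) (sub_nonneg.2 hqp))]
  have habs : |M| ≤ Real.sqrt ((1 - β₁) / (1 - β₂)) * Real.sqrt V := by
    rw [← Real.sqrt_sq_eq_abs, ← Real.sqrt_mul hC0]
    exact Real.sqrt_le_sqrt hM2
  have hD : 0 < Real.sqrt V + ε := by positivity
  rw [abs_div, abs_of_pos hD, div_le_iff₀ hD]
  have hR0 : 0 ≤ Real.sqrt ((1 - β₁) / (1 - β₂)) := Real.sqrt_nonneg _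
  nlinarith [habs, Real.sqrt_nonneg V]
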